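/- For integers n_k > ⋯ > n_1 ≥ 1 and m_l > ⋯ > m_1 ≥ 1 and any x_1,…,x_k, y_1,…,y_l ∈ {1,−1}: (i) P(ξ̃_{α_{n_i}} = x_i for 1 ≤ i ≤ k, ξ̃_{β_{m_j}} = y_j for 1 ≤ j ≤ l, α_{n_k} > β_{m_l}) = (1/2)·P(ξ̃_{α_{n_i}} = x_i for 1 ≤ i ≤ k−1, ξ̃_{β_{m_j}} = y_j for 1 ≤ j ≤ l, α_{n_k} > β_{m_l}); and (ii) P(ξ̃_{α_{n_i}} = x_i for 1 ≤ i ≤ k, ξ̃_{β_{m_j}} = y_j for 1 ≤ j ≤ l, α_{n_k} < β_{m_l}) = (1/2)·P(ξ̃_{α_{n_i}} = x_i for 1 ≤ i ≤ k, ξ̃_{β_{m_j}} = y_j for 1 ≤ j ≤ l−1, α_{n_k} < β_{m_l}). -/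

import Mathlib

open MeasureTheory ProbabilityTheory Filter Set

noncomputable section

variable {Ω : Type*}

/-- `Q n = 1` if the `n`-th moves agree, `0` if they are opposite. -/
def Qproc (ξ η : ℕ → Ω → ℝ) (n : ℕ) (ω : Ω) : ℕ :=
  if ξ n ω = η n ω then 1 else 0

/-- `T n = ∑_{k=1}^n Q k`, the number of common movements up to step `n`. -/
def Tproc (ξ η : ℕ → Ω → ℝ) (n : ℕ) (ω : Ω) : ℕ :=
  ∑ k ∈ Finset.Icc 1 n, Qproc ξ η k ω

/-- `S n = n - T n`, the number of counter movements up to step `n`. -/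
def Sproc (ξ η : ℕ → Ω → ℝ) (n : ℕ) (ω : Ω) : ℕ :=
  n - Tproc ξ η n ω

/-- `α n = inf {k ≥ 1 : T k = n}`, with `inf ∅ = ⊤`, valued in `ℕ∞`. -/
def alphaProc (ξ η : ℕ → Ω → ℝ) (n : ℕ) (ω : Ω) : ℕ∞ :=
  ⨅ (k : ℕ) (_ : 1 ≤ k ∧ Tproc ξ η k ω = n), (k : ℕ∞)

/-- `β n = inf {k ≥ 1 : S k = n}`, with `inf ∅ = ⊤`, valued in `ℕ∞`. -/
def betaProc (ξ η : ℕ → Ω → ℝ) (n : ℕ) (ω : Ω) : ℕ∞ :=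
  ⨅ (k : ℕ) (_ : 1 ≤ k ∧ Sproc ξ η k ω = n), (k : ℕ∞)

/-- `ξ̃_{α n}`: equal to `ξ_i` on `{α n = i}` (`i < ∞`) and to `ζ n` on `{α n = ∞}`. -/
def xiAlpha (ξ η ζ : ℕ → Ω → ℝ) (n : ℕ) (ω : Ω) : ℝ :=
  if alphaProc ξ η n ω = ⊤ then ζ n ω else ξ (alphaProc ξ η n ω).toNat ω

/-- `ξ̃_{β m}`: equal to `ξ_i` on `{β m = i}` (`i < ∞`) and to `ψ m` on `{β m = ∞}`. -/
def xiBeta (ξ η ψ : ℕ → Ω → ℝ) (m : ℕ) (ω : Ω) : ℝ :=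
  if betaProc ξ η m ω = ⊤ then ψ m ω else ξ (betaProc ξ η m ω).toNat ω

/-- The common-movement walk `X n = ∑_{i=1}^n ξ̃_{α i}`. -/
def Xproc (ξ η ζ : ℕ → Ω → ℝ) (n : ℕ) (ω : Ω) : ℝ :=
  ∑ i ∈ Finset.Icc 1 n, xiAlpha ξ η ζ i ω

/-- The counter-movement walk `Y n = ∑_{i=1}^n ξ̃_{β i}`. -/
def Yproc (ξ η ψ : ℕ → Ω → ℝ) (n : ℕ) (ω : Ω) : ℝ :=
  ∑ i ∈ Finset.Icc 1 n, xiBeta ξ η ψ i ω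

section Deterministic

variable {Ω : Type*} (ξ η : ℕ → Ω → ℝ)

lemma Tproc_zero (ω : Ω) : Tproc ξ η 0 ω = 0 := by simp [Tproc]

lemma Tproc_succ (j : ℕ) (ω : Ω) :
    Tproc ξ η (j + 1) ω = Tproc ξ η j ω + Qproc ξ η (j + 1) ω := by
  unfold Tproc
  rw [Finset.sum_Icc_succ_top (by omega : 1 ≤ j + 1)]

lemma Qproc_le_one (n : ℕ) (ω : Ω) : Qproc ξ η n ω ≤ 1 := by
  unfold Qproc; split <;> omega

lemma Tproc_mono {a b : ℕ} (h : a ≤ b) (ω : Ω) : Tproc ξ η a ω ≤ Tproc ξ η b ω := by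
  unfold Tproc
  exact Finset.sum_le_sum_of_subset (Finset.Icc_subset_Icc le_rfl h)

lemma Tproc_le (t : ℕ) (ω : Ω) : Tproc ξ η t ω ≤ t := by
  induction t with
  | zero => simp [Tproc_zero]
  | succ s ih =>
    have := Qproc_le_one ξ η (s + 1) ω
    rw [Tproc_succ]; omega

lemma Tproc_hit {n t : ℕ} {ω : Ω} (h : n ≤ Tproc ξ η t ω) :
    ∃ j, j ≤ t ∧ Tproc ξ η j ω = n := by
  induction t with
  | zero => exact ⟨0, le_rfl, by rw [Tproc_zero] at h ⊢; omega⟩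
  | succ s ih =>
    by_cases hs : n ≤ Tproc ξ η s ω
    · obtain ⟨j, hj, hj2⟩ := ih hs
      exact ⟨j, by omega, hj2⟩
    · refine ⟨s + 1, le_rfl, ?_⟩
      have h1 := Tproc_succ ξ η s ω
      have h2 := Qproc_le_one ξ η (s + 1) ω
      omega

lemma alphaProc_le_iff {n : ℕ} (hn : 1 ≤ n) (t : ℕ) (ω : Ω) :
    alphaProc ξ η n ω ≤ (t : ℕ∞) ↔ n ≤ Tproc ξ η t ω := by
  constructor
  · intro h
    have h' : alphaProc ξ η n ω < ((t + 1 : ℕ) : ℕ∞) := by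
      refine lt_of_le_of_lt h ?_
      exact_mod_cast Nat.lt_succ_self t
    rw [alphaProc, iInf_lt_iff] at h'
    obtain ⟨j, hj⟩ := h'
    rw [iInf_lt_iff] at hj
    obtain ⟨⟨hj1, hj2⟩, hjlt⟩ := hj
    have hjt : j ≤ t := by exact_mod_cast Nat.lt_succ_iff.mp (by exact_mod_cast hjlt)
    calc n = Tproc ξ η j ω := hj2.symm
    _ ≤ Tproc ξ η t ω := Tproc_mono ξ η hjt ω
  · intro h
    obtain ⟨j, hjt, hj⟩ := Tproc_hit ξ η h
    have hj1 : 1 ≤ j := by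
      rcases Nat.eq_zero_or_pos j with h0 | h1
      · rw [h0, Tproc_zero] at hj; omega
      · exact h1
    calc alphaProc ξ η n ω ≤ (j : ℕ∞) := by
          exact iInf_le_of_le j (iInf_le_of_le ⟨hj1, hj⟩ le_rfl)
    _ ≤ (t : ℕ∞) := by exact_mod_cast hjt

lemma alphaProc_top_iff {n : ℕ} (hn : 1 ≤ n) (ω : Ω) :
    alphaProc ξ η n ω = ⊤ ↔ ∀ t : ℕ, Tproc ξ η t ω < n := by
  constructor
  · intro h t
    by_contra h'
    push_neg at h'
    have := (alphaProc_le_iff ξ η hn t ω).mpr h'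
    rw [h] at this
    simp at this
  · intro h
    by_contra htop
    obtain ⟨j, hj⟩ := WithTop.ne_top_iff_exists.mp htop
    have : alphaProc ξ η n ω ≤ (j : ℕ∞) := le_of_eq hj.symm
    have := (alphaProc_le_iff ξ η hn j ω).mp this
    exact absurd this (by have := h j; omega)

lemma alphaProc_ne_zero {n : ℕ} (hn : 1 ≤ n) (ω : Ω) :
    alphaProc ξ η n ω ≠ ((0 : ℕ) : ℕ∞) := by
  intro h
  have : alphaProc ξ η n ω ≤ ((0 : ℕ) : ℕ∞) := le_of_eq h
  have := (alphaProc_le_iff ξ η hn 0 ω).mp this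
  rw [Tproc_zero] at this; omega

lemma alphaProc_eq_coe_iff {n i : ℕ} (hn : 1 ≤ n) (hi : 1 ≤ i) (ω : Ω) :
    alphaProc ξ η n ω = (i : ℕ∞) ↔
      Tproc ξ η i ω = n ∧ Tproc ξ η (i - 1) ω = n - 1 := by
  constructor
  · intro h
    have h1 : n ≤ Tproc ξ η i ω := (alphaProc_le_iff ξ η hn i ω).mp h.le
    have h2 : ¬ alphaProc ξ η n ω ≤ ((i - 1 : ℕ) : ℕ∞) := by
      rw [h]
      intro hle
      have : (i : ℕ) ≤ i - 1 := by exact_mod_cast hle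
      omega
    rw [alphaProc_le_iff ξ η hn] at h2
    push_neg at h2
    have h3 : Tproc ξ η i ω ≤ Tproc ξ η (i - 1) ω + 1 := by
      have ha := Tproc_succ ξ η (i - 1) ω
      have hb := Qproc_le_one ξ η (i - 1 + 1) ω
      have hi' : i - 1 + 1 = i := by omega
      rw [hi'] at ha hb
      omega
    omega
  · rintro ⟨h1, h2⟩
    have hle : alphaProc ξ η n ω ≤ (i : ℕ∞) :=
      (alphaProc_le_iff ξ η hn i ω).mpr h1.ge
    have hnle : ¬ alphaProc ξ η n ω ≤ ((i - 1 : ℕ) : ℕ∞) := by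
      rw [alphaProc_le_iff ξ η hn]
      omega
    obtain ⟨j, hj, hji⟩ := WithTop.le_coe_iff.mp hle
    rw [hj] at hnle ⊢
    have : ¬ (j ≤ i - 1) := fun hc => hnle (Nat.cast_le.mpr hc)
    congr 1
    omega

lemma alphaProc_eq_coe_xi {n i : ℕ} (hn : 1 ≤ n) (hi : 1 ≤ i) {ω : Ω}
    (h : alphaProc ξ η n ω = (i : ℕ∞)) : ξ i ω = η i ω := by
  obtain ⟨h1, h2⟩ := (alphaProc_eq_coe_iff ξ η hn hi ω).mp h
  have h3 := Tproc_succ ξ η (i - 1) ω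
  have hi' : i - 1 + 1 = i := by omega
  rw [hi'] at h3
  have hQ : Qproc ξ η i ω = 1 := by
    have := Qproc_le_one ξ η i ω
    omega
  by_contra hne
  rw [Qproc, if_neg hne] at hQ
  omega

lemma alphaProc_mono {n n' : ℕ} (hn : 1 ≤ n) (hnn' : n ≤ n') (ω : Ω) :
    alphaProc ξ η n ω ≤ alphaProc ξ η n' ω := by
  rcases eq_or_ne (alphaProc ξ η n' ω) ⊤ with h | h
  · rw [h]; exact le_top
  · obtain ⟨j, hj⟩ := WithTop.ne_top_iff_exists.mp h
    rw [← hj]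
    have hn' : 1 ≤ n' := le_trans hn hnn'
    have : n' ≤ Tproc ξ η j ω := (alphaProc_le_iff ξ η hn' j ω).mp (le_of_eq hj.symm)
    exact (alphaProc_le_iff ξ η hn j ω).mpr (le_trans hnn' this)

lemma xiAlpha_of_coe {ζ : ℕ → Ω → ℝ} {n t : ℕ} {ω : Ω}
    (h : alphaProc ξ η n ω = (t : ℕ∞)) : xiAlpha ξ η ζ n ω = ξ t ω := by
  rw [xiAlpha, if_neg (by rw [h]; exact WithTop.coe_ne_top), h]
  rfl

lemma xiAlpha_of_top {ζ : ℕ → Ω → ℝ} {n : ℕ} {ω : Ω}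
    (h : alphaProc ξ η n ω = ⊤) : xiAlpha ξ η ζ n ω = ζ n ω := by
  rw [xiAlpha, if_pos h]

end Deterministic
section Conversion

variable {Ω : Type*} {ξ η : ℕ → Ω → ℝ}

lemma Sproc_eq_neg (hξv : ∀ n ω, ξ n ω = 1 ∨ ξ n ω = -1)
    (hηv : ∀ n ω, η n ω = 1 ∨ η n ω = -1) (n : ℕ) (ω : Ω) :
    Sproc ξ η n ω = Tproc ξ (fun m ω' => -η m ω') n ω := by
  have hsum : Tproc ξ η n ω + Tproc ξ (fun m ω' => -η m ω') n ω = n := by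
    unfold Tproc
    rw [← Finset.sum_add_distrib]
    have : ∀ k ∈ Finset.Icc 1 n, Qproc ξ η k ω + Qproc ξ (fun m ω' => -η m ω') k ω = 1 := by
      intro k _
      unfold Qproc
      rcases hξv k ω with h1 | h1 <;> rcases hηv k ω with h2 | h2 <;>
        simp [h1, h2] <;> norm_num
    rw [Finset.sum_congr rfl this, Finset.sum_const, Nat.Icc_eq_range' ]
    simp
  have := Tproc_le ξ η n ω
  unfold Sproc
  omega

lemma betaProc_eq_neg (hξv : ∀ n ω, ξ n ω = 1 ∨ ξ n ω = -1)
    (hηv : ∀ n ω, η n ω = 1 ∨ η n ω = -1) :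
    betaProc ξ η = alphaProc ξ (fun m ω' => -η m ω') := by
  funext n ω
  unfold betaProc alphaProc
  simp only [Sproc_eq_neg hξv hηv]

lemma alphaProc_eq_neg (hξv : ∀ n ω, ξ n ω = 1 ∨ ξ n ω = -1)
    (hηv : ∀ n ω, η n ω = 1 ∨ η n ω = -1) :
    alphaProc ξ η = betaProc ξ (fun m ω' => -η m ω') := by
  have hηv' : ∀ n ω, -η n ω = 1 ∨ -η n ω = -1 := by
    intro n ω; rcases hηv n ω with h | h <;> simp [h]
  have := betaProc_eq_neg hξv hηv'
  have h2 : (fun m (ω' : Ω) => - - η m ω') = η := by funext m ω'; simp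
  rw [this, h2]

lemma xiBeta_eq_neg (ψ : ℕ → Ω → ℝ) (hξv : ∀ n ω, ξ n ω = 1 ∨ ξ n ω = -1)
    (hηv : ∀ n ω, η n ω = 1 ∨ η n ω = -1) :
    xiBeta ξ η ψ = xiAlpha ξ (fun m ω' => -η m ω') ψ := by
  funext n ω
  unfold xiBeta xiAlpha
  rw [betaProc_eq_neg hξv hηv]

lemma xiAlpha_eq_neg (ζ : ℕ → Ω → ℝ) (hξv : ∀ n ω, ξ n ω = 1 ∨ ξ n ω = -1)
    (hηv : ∀ n ω, η n ω = 1 ∨ η n ω = -1) :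
    xiAlpha ξ η ζ = xiBeta ξ (fun m ω' => -η m ω') ζ := by
  funext n ω
  unfold xiBeta xiAlpha
  rw [alphaProc_eq_neg hξv hηv]

end Conversion
section Meas

open MeasureTheory

variable {Ω : Type*} {mΩ : MeasurableSpace Ω} {F : Filtration ℕ mΩ} {ξ η : ℕ → Ω → ℝ}

lemma measSet_mono {m1 m2 : MeasurableSpace Ω} (h : m1 ≤ m2) {s : Set Ω}
    (hs : MeasurableSet[m1] s) : MeasurableSet[m2] s := h s hs

lemma measurable_Tproc (hξm : ∀ n, 1 ≤ n → Measurable[F n] (ξ n))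
    (hηm : ∀ n, 1 ≤ n → Measurable[F n] (η n)) (t : ℕ) :
    Measurable[F t] (Tproc ξ η t) := by
  unfold Tproc
  refine Finset.measurable_sum _ (fun k hk => ?_)
  rw [Finset.mem_Icc] at hk
  have hξ : Measurable[F t] (ξ k) := (hξm k hk.1).mono (F.mono hk.2) le_rfl
  have hη : Measurable[F t] (η k) := (hηm k hk.1).mono (F.mono hk.2) le_rfl
  unfold Qproc
  exact Measurable.ite (measurableSet_eq_fun hξ hη) measurable_const measurable_const

lemma measurableSet_T_eq (hξm : ∀ n, 1 ≤ n → Measurable[F n] (ξ n))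
    (hηm : ∀ n, 1 ≤ n → Measurable[F n] (η n)) (t c : ℕ) :
    MeasurableSet[F t] {ω | Tproc ξ η t ω = c} :=
  measurable_Tproc hξm hηm t (measurableSet_singleton c)

lemma measurableSet_T_ge (hξm : ∀ n, 1 ≤ n → Measurable[F n] (ξ n))
    (hηm : ∀ n, 1 ≤ n → Measurable[F n] (η n)) (t c : ℕ) :
    MeasurableSet[F t] {ω | c ≤ Tproc ξ η t ω} :=
  measurable_Tproc hξm hηm t (measurableSet_Ici (a := c))

lemma measurableSet_alpha_coe (hξm : ∀ n, 1 ≤ n → Measurable[F n] (ξ n))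
    (hηm : ∀ n, 1 ≤ n → Measurable[F n] (η n)) {n : ℕ} (hn : 1 ≤ n) (t : ℕ) :
    MeasurableSet[F t] {ω | alphaProc ξ η n ω = (t : ℕ∞)} := by
  rcases Nat.eq_zero_or_pos t with h0 | h1
  · subst h0
    have : {ω | alphaProc ξ η n ω = ((0 : ℕ) : ℕ∞)} = ∅ := by
      ext ω; simpa using alphaProc_ne_zero ξ η hn ω
    rw [this]; exact @MeasurableSet.empty _ (F _)
  · have : {ω | alphaProc ξ η n ω = (t : ℕ∞)} =
        {ω | Tproc ξ η t ω = n} ∩ {ω | Tproc ξ η (t - 1) ω = n - 1} := by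
      ext ω; exact alphaProc_eq_coe_iff ξ η hn h1 ω
    rw [this]
    exact (measurableSet_T_eq hξm hηm t n).inter
      (measSet_mono (F.mono (by omega)) (measurableSet_T_eq hξm hηm (t - 1) (n - 1)))

/-- `{α n = t} ∩ {ξ t = v}` is `F t`-measurable (also for `t = 0`, where it is empty). -/
lemma measurableSet_alpha_coe_xi (hξm : ∀ n, 1 ≤ n → Measurable[F n] (ξ n))
    (hηm : ∀ n, 1 ≤ n → Measurable[F n] (η n)) {n : ℕ} (hn : 1 ≤ n) (t : ℕ) (v : ℝ) :
    MeasurableSet[F t] ({ω | alphaProc ξ η n ω = (t : ℕ∞)} ∩ {ω | ξ t ω = v}) := by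
  rcases Nat.eq_zero_or_pos t with h0 | h1
  · subst h0
    have : ({ω | alphaProc ξ η n ω = ((0 : ℕ) : ℕ∞)} ∩ {ω | ξ 0 ω = v}) = ∅ := by
      ext ω; simp only [Set.mem_inter_iff, Set.mem_setOf_eq, Set.mem_empty_iff_false, iff_false,
        not_and]
      intro h; exact absurd h (alphaProc_ne_zero ξ η hn ω)
    rw [this]; exact @MeasurableSet.empty _ (F _)
  · exact (measurableSet_alpha_coe hξm hηm hn t).inter
      ((hξm t h1) (measurableSet_singleton v))

lemma measurableSet_alpha_top (hξm : ∀ n, 1 ≤ n → Measurable[F n] (ξ n))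
    (hηm : ∀ n, 1 ≤ n → Measurable[F n] (η n)) {n : ℕ} (hn : 1 ≤ n)
    {m' : MeasurableSpace Ω} (hm' : ∀ t, (F t : MeasurableSpace Ω) ≤ m') :
    MeasurableSet[m'] {ω | alphaProc ξ η n ω = ⊤} := by
  have : {ω | alphaProc ξ η n ω = ⊤} = ⋂ t : ℕ, {ω | Tproc ξ η t ω < n} := by
    ext ω
    simp only [Set.mem_setOf_eq, Set.mem_iInter]
    exact alphaProc_top_iff ξ η hn ω
  rw [this]
  exact MeasurableSet.iInter (fun t => measSet_mono (hm' t)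
    (measurable_Tproc hξm hηm t (measurableSet_Iio (a := n))))

lemma measurableSet_alpha_coe' (hξm : ∀ n, 1 ≤ n → Measurable[F n] (ξ n))
    (hηm : ∀ n, 1 ≤ n → Measurable[F n] (η n)) {n : ℕ} (hn : 1 ≤ n) (t : ℕ)
    {m' : MeasurableSpace Ω} (hm' : ∀ s, (F s : MeasurableSpace Ω) ≤ m') :
    MeasurableSet[m'] {ω | alphaProc ξ η n ω = (t : ℕ∞)} :=
  measSet_mono (hm' t) (measurableSet_alpha_coe hξm hηm hn t)

lemma measurableSet_xiAlpha (hξm : ∀ n, 1 ≤ n → Measurable[F n] (ξ n))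
    (hηm : ∀ n, 1 ≤ n → Measurable[F n] (η n)) {ζ : ℕ → Ω → ℝ} (hζm : ∀ n, Measurable (ζ n))
    {n : ℕ} (hn : 1 ≤ n) (v : ℝ) :
    MeasurableSet {ω | xiAlpha ξ η ζ n ω = v} := by
  have hdec : {ω | xiAlpha ξ η ζ n ω = v} =
      ({ω | alphaProc ξ η n ω = ⊤} ∩ {ω | ζ n ω = v}) ∪
        ⋃ t : ℕ, ({ω | alphaProc ξ η n ω = (t : ℕ∞)} ∩ {ω | ξ t ω = v}) := by
    ext ω
    simp only [Set.mem_setOf_eq, Set.mem_union, Set.mem_inter_iff, Set.mem_iUnion]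
    rcases eq_or_ne (alphaProc ξ η n ω) ⊤ with h | h
    · rw [xiAlpha_of_top ξ η h]
      constructor
      · intro hv; exact Or.inl ⟨h, hv⟩
      · rintro (⟨_, hv⟩ | ⟨t, ht, _⟩)
        · exact hv
        · rw [h] at ht; exact absurd ht.symm WithTop.coe_ne_top
    · obtain ⟨t, ht⟩ := WithTop.ne_top_iff_exists.mp h
      rw [xiAlpha_of_coe ξ η ht.symm]
      constructor
      · intro hv; exact Or.inr ⟨t, ht.symm, hv⟩
      · rintro (⟨htop, _⟩ | ⟨t', ht', hv⟩)
        · exact absurd htop h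
        · have : t' = t := by
            have := ht.trans ht'
            exact Nat.cast_inj.mp this.symm
          rw [← this]; exact hv
  rw [hdec]
  refine MeasurableSet.union ?_ (MeasurableSet.iUnion fun t => ?_)
  · exact (measurableSet_alpha_top hξm hηm hn F.le).inter
      (hζm n (measurableSet_singleton v))
  · exact measSet_mono (F.le t) (measurableSet_alpha_coe_xi hξm hηm hn t v)

end Meas
section KP

open MeasureTheory

variable {Ω : Type*} {mΩ : MeasurableSpace Ω} (P : Measure Ω) [IsProbabilityMeasure P]
  (F : Filtration ℕ mΩ) {ξ η : ℕ → Ω → ℝ}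

lemma half_set {i : ℕ} (R : Set Ω) (hR : MeasurableSet R)
    (hcond : P[R.indicator (fun _ => (1 : ℝ)) | F (i - 1)] =ᵐ[P] fun _ => 1 / 2)
    (B : Set Ω) (hB : MeasurableSet[F (i - 1)] B) : P (B ∩ R) = 2⁻¹ * P B := by
  have hm : (F (i - 1) : MeasurableSpace Ω) ≤ mΩ := F.le _
  have hBm : MeasurableSet B := measSet_mono hm hB
  have hint : Integrable (R.indicator fun _ => (1 : ℝ)) P :=
    (integrable_const (1 : ℝ)).indicator hR
  have h1 : ∫ ω in B, R.indicator (fun _ => (1 : ℝ)) ω ∂P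
      = ∫ ω in B, (P[R.indicator (fun _ => (1 : ℝ)) | F (i - 1)]) ω ∂P :=
    (setIntegral_condExp hm hint hB).symm
  have h2 : ∫ ω in B, (P[R.indicator (fun _ => (1 : ℝ)) | F (i - 1)]) ω ∂P
      = ∫ _ω in B, (1 / 2 : ℝ) ∂P :=
    integral_congr_ae (ae_restrict_of_ae hcond)
  have h3 : ∫ ω in B, R.indicator (fun _ => (1 : ℝ)) ω ∂P = (P (B ∩ R)).toReal := by
    rw [setIntegral_indicator hR, setIntegral_const, smul_eq_mul, mul_one]
    rfl
  have h4 : ∫ _ω in B, (1 / 2 : ℝ) ∂P = (P B).toReal * (1 / 2) := by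
    rw [setIntegral_const, smul_eq_mul]
    rfl
  have h5 : (P (B ∩ R)).toReal = (2⁻¹ * P B).toReal := by
    rw [ENNReal.toReal_mul]
    rw [← h3, h1, h2, h4]
    norm_num
    ring
  exact (ENNReal.toReal_eq_toReal_iff' (measure_ne_top P _)
    (ENNReal.mul_ne_top (by norm_num) (measure_ne_top P B))).mp h5

lemma KP (hξm : ∀ n, 1 ≤ n → Measurable[F n] (ξ n))
    (hηm : ∀ n, 1 ≤ n → Measurable[F n] (η n))
    (hξv : ∀ n ω, ξ n ω = 1 ∨ ξ n ω = -1)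
    (hηv : ∀ n ω, η n ω = 1 ∨ η n ω = -1)
    (hhalf : ∀ n, 1 ≤ n →
      (P[({ω | ξ n ω = 1}).indicator (fun _ => (1 : ℝ)) | F (n - 1)] =ᵐ[P] fun _ => 1 / 2) ∧
      (P[({ω | ξ n ω = -1}).indicator (fun _ => (1 : ℝ)) | F (n - 1)] =ᵐ[P] fun _ => 1 / 2) ∧
      (P[({ω | η n ω = 1}).indicator (fun _ => (1 : ℝ)) | F (n - 1)] =ᵐ[P] fun _ => 1 / 2) ∧
      (P[({ω | η n ω = -1}).indicator (fun _ => (1 : ℝ)) | F (n - 1)] =ᵐ[P] fun _ => 1 / 2))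
    {i : ℕ} (hi : 1 ≤ i) (B : Set Ω) (hB : MeasurableSet[F (i - 1)] B)
    {v : ℝ} (hv : v = 1 ∨ v = -1) :
    P (B ∩ {ω | ξ i ω = η i ω} ∩ {ω | ξ i ω = v})
      = 2⁻¹ * P (B ∩ {ω | ξ i ω = η i ω}) := by
  obtain ⟨hc1, hc2, hc3, hc4⟩ := hhalf i hi
  have hMξ : ∀ w : ℝ, MeasurableSet {ω | ξ i ω = w} := fun w =>
    measSet_mono (F.le i) ((hξm i hi) (measurableSet_singleton w))
  have hMη : ∀ w : ℝ, MeasurableSet {ω | η i ω = w} := fun w =>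
    measSet_mono (F.le i) ((hηm i hi) (measurableSet_singleton w))
  have hBm : MeasurableSet B := measSet_mono (F.le (i - 1)) hB
  set a := P (B ∩ ({ω | ξ i ω = 1} ∩ {ω | η i ω = 1})) with ha
  set b := P (B ∩ ({ω | ξ i ω = 1} ∩ {ω | η i ω = -1})) with hb
  set c := P (B ∩ ({ω | ξ i ω = -1} ∩ {ω | η i ω = 1})) with hc
  set d := P (B ∩ ({ω | ξ i ω = -1} ∩ {ω | η i ω = -1})) with hd
  have hone : (1 : ℝ) ≠ -1 := by norm_num
  have e1 : a + b = 2⁻¹ * P B := by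
    rw [← half_set P F _ (hMξ 1) hc1 B hB]
    have hsp : B ∩ {ω | ξ i ω = 1} =
        (B ∩ ({ω | ξ i ω = 1} ∩ {ω | η i ω = 1})) ∪
          (B ∩ ({ω | ξ i ω = 1} ∩ {ω | η i ω = -1})) := by
      ext ω
      simp only [Set.mem_inter_iff, Set.mem_union, Set.mem_setOf_eq]
      rcases hηv i ω with h | h <;> simp [h] <;> tauto
    rw [hsp, measure_union ?_ (hBm.inter ((hMξ 1).inter (hMη (-1))))]
    refine Set.disjoint_left.mpr ?_
    rintro ω ⟨_, _, h1⟩ ⟨_, _, h2⟩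
    rw [Set.mem_setOf_eq] at h1 h2
    rw [h1] at h2; norm_num at h2
  have e2 : a + c = 2⁻¹ * P B := by
    rw [← half_set P F _ (hMη 1) hc3 B hB]
    have hsp : B ∩ {ω | η i ω = 1} =
        (B ∩ ({ω | ξ i ω = 1} ∩ {ω | η i ω = 1})) ∪
          (B ∩ ({ω | ξ i ω = -1} ∩ {ω | η i ω = 1})) := by
      ext ω
      simp only [Set.mem_inter_iff, Set.mem_union, Set.mem_setOf_eq]
      rcases hξv i ω with h | h <;> simp [h] <;> tauto
    rw [hsp, measure_union ?_ (hBm.inter ((hMξ (-1)).inter (hMη 1)))]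
    refine Set.disjoint_left.mpr ?_
    rintro ω ⟨_, h1, _⟩ ⟨_, h2, _⟩
    rw [Set.mem_setOf_eq] at h1 h2
    rw [h1] at h2; norm_num at h2
  have e3 : c + d = 2⁻¹ * P B := by
    rw [← half_set P F _ (hMξ (-1)) hc2 B hB]
    have hsp : B ∩ {ω | ξ i ω = -1} =
        (B ∩ ({ω | ξ i ω = -1} ∩ {ω | η i ω = 1})) ∪
          (B ∩ ({ω | ξ i ω = -1} ∩ {ω | η i ω = -1})) := by
      ext ω
      simp only [Set.mem_inter_iff, Set.mem_union, Set.mem_setOf_eq]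
      rcases hηv i ω with h | h <;> simp [h] <;> tauto
    rw [hsp, measure_union ?_ (hBm.inter ((hMξ (-1)).inter (hMη (-1))))]
    refine Set.disjoint_left.mpr ?_
    rintro ω ⟨_, _, h1⟩ ⟨_, _, h2⟩
    rw [Set.mem_setOf_eq] at h1 h2
    rw [h1] at h2; norm_num at h2
  have had : a = d := by
    have h1 : c + a = c + d := by rw [add_comm c a, e2, e3]
    exact (ENNReal.add_right_inj (measure_ne_top P _)).mp h1
  have hsplit : B ∩ {ω | ξ i ω = η i ω} =
      (B ∩ ({ω | ξ i ω = 1} ∩ {ω | η i ω = 1})) ∪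
        (B ∩ ({ω | ξ i ω = -1} ∩ {ω | η i ω = -1})) := by
    ext ω
    simp only [Set.mem_inter_iff, Set.mem_union, Set.mem_setOf_eq]
    constructor
    · rintro ⟨hBω, heq⟩
      rcases hξv i ω with h | h
      · exact Or.inl ⟨hBω, h, by rw [← heq, h]⟩
      · exact Or.inr ⟨hBω, h, by rw [← heq, h]⟩
    · rintro (⟨hBω, h1, h2⟩ | ⟨hBω, h1, h2⟩) <;> exact ⟨hBω, by rw [h1, h2]⟩
  have hdisj2 : Disjoint (B ∩ ({ω | ξ i ω = 1} ∩ {ω | η i ω = 1}))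
      (B ∩ ({ω | ξ i ω = -1} ∩ {ω | η i ω = -1})) := by
    refine Set.disjoint_left.mpr ?_
    rintro ω ⟨_, h1, _⟩ ⟨_, h2, _⟩
    rw [Set.mem_setOf_eq] at h1 h2
    rw [h1] at h2; norm_num at h2
  have hPeq : P (B ∩ {ω | ξ i ω = η i ω}) = a + d := by
    rw [hsplit, measure_union hdisj2 (hBm.inter ((hMξ (-1)).inter (hMη (-1))))]
  have hhalf2 : (2 : ENNReal)⁻¹ * (a + d) = a := by
    rw [← had, ← two_mul, ← mul_assoc, ENNReal.inv_mul_cancel two_ne_zero ENNReal.ofNat_ne_top,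
      one_mul]
  rcases hv with hv | hv
  · subst hv
    have : B ∩ {ω | ξ i ω = η i ω} ∩ {ω | ξ i ω = 1} =
        B ∩ ({ω | ξ i ω = 1} ∩ {ω | η i ω = 1}) := by
      ext ω
      simp only [Set.mem_inter_iff, Set.mem_setOf_eq]
      constructor
      · rintro ⟨⟨hBω, heq⟩, h1⟩; exact ⟨hBω, h1, by rw [← heq, h1]⟩
      · rintro ⟨hBω, h1, h2⟩; exact ⟨⟨hBω, by rw [h1, h2]⟩, h1⟩
    rw [this, hPeq, hhalf2]
  · subst hv
    have : B ∩ {ω | ξ i ω = η i ω} ∩ {ω | ξ i ω = -1} =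
        B ∩ ({ω | ξ i ω = -1} ∩ {ω | η i ω = -1}) := by
      ext ω
      simp only [Set.mem_inter_iff, Set.mem_setOf_eq]
      constructor
      · rintro ⟨⟨hBω, heq⟩, h1⟩; exact ⟨hBω, h1, by rw [← heq, h1]⟩
      · rintro ⟨hBω, h1, h2⟩; exact ⟨⟨hBω, by rw [h1, h2]⟩, h1⟩
    rw [this, hPeq, hhalf2, had]

end KP
section Indep

open MeasureTheory ProbabilityTheory

variable {Ω : Type*} {mΩ : MeasurableSpace Ω} {P : Measure Ω} [IsProbabilityMeasure P]
  {F : Filtration ℕ mΩ} {ζ ψ : ℕ → Ω → ℝ}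

lemma hIndzeta
    (hζd : ∀ n, P {ω | ζ n ω = 1} = 2⁻¹ ∧ P {ω | ζ n ω = -1} = 2⁻¹)
    (hindep : iIndep (fun i : ℕ ⊕ ℕ ⊕ Unit =>
      Sum.elim (fun n => MeasurableSpace.comap (ζ n) inferInstance)
        (Sum.elim (fun n => MeasurableSpace.comap (ψ n) inferInstance)
          (fun _ => ⨆ n, (F n : MeasurableSpace Ω))) i) P) :
    ∀ G : Set Ω, MeasurableSet[⨆ n, (F n : MeasurableSpace Ω)] G →
      ∀ (s : Finset ℕ) (c : ℕ → ℝ), (∀ n ∈ s, c n = 1 ∨ c n = -1) →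
      P (G ∩ ⋂ n ∈ s, {ω | ζ n ω = c n}) = P G * 2⁻¹ ^ s.card := by
  intro G hG s c hc
  classical
  set f : ℕ ⊕ ℕ ⊕ Unit → Set Ω := fun i =>
    Sum.elim (fun n => {ω | ζ n ω = c n}) (Sum.elim (fun _ => Set.univ) (fun _ => G)) i with hf
  have hmeas : ∀ i ∈ insert (Sum.inr (Sum.inr ())) (s.image Sum.inl),
      MeasurableSet[Sum.elim (fun n => MeasurableSpace.comap (ζ n) inferInstance)
        (Sum.elim (fun n => MeasurableSpace.comap (ψ n) inferInstance)
          (fun _ => ⨆ n, (F n : MeasurableSpace Ω))) i] (f i) := by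
    intro i hi
    rcases Finset.mem_insert.mp hi with h | h
    · subst h; exact hG
    · obtain ⟨n, hn, rfl⟩ := Finset.mem_image.mp h
      exact MeasurableSpace.measurableSet_comap.mpr ⟨{c n}, measurableSet_singleton _, rfl⟩
  have h := hindep.meas_biInter hmeas
  have hnotmem : (Sum.inr (Sum.inr ()) : ℕ ⊕ ℕ ⊕ Unit) ∉ s.image Sum.inl := by simp
  have hInter : (⋂ i ∈ insert (Sum.inr (Sum.inr ())) (s.image Sum.inl), f i)
      = G ∩ ⋂ n ∈ s, {ω | ζ n ω = c n} := by
    rw [Finset.set_biInter_insert, Finset.set_biInter_finset_image]; rfl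
  have hProd : (∏ i ∈ insert (Sum.inr (Sum.inr ())) (s.image Sum.inl), P (f i))
      = P G * 2⁻¹ ^ s.card := by
    rw [Finset.prod_insert hnotmem,
      Finset.prod_image (fun a _ b _ hab => Sum.inl_injective hab)]
    congr 1
    calc (∏ n ∈ s, P (f (Sum.inl n))) = ∏ n ∈ s, (2⁻¹ : ENNReal) := by
          refine Finset.prod_congr rfl (fun n hn => ?_)
          rcases hc n hn with h' | h'
          · show P {ω | ζ n ω = c n} = 2⁻¹
            rw [h']; exact (hζd n).1
          · show P {ω | ζ n ω = c n} = 2⁻¹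
            rw [h']; exact (hζd n).2
    _ = (2⁻¹ : ENNReal) ^ s.card := Finset.prod_const _
  rw [hInter, hProd] at h
  exact h

lemma hIndpsi
    (hψd : ∀ n, P {ω | ψ n ω = 1} = 2⁻¹ ∧ P {ω | ψ n ω = -1} = 2⁻¹)
    (hindep : iIndep (fun i : ℕ ⊕ ℕ ⊕ Unit =>
      Sum.elim (fun n => MeasurableSpace.comap (ζ n) inferInstance)
        (Sum.elim (fun n => MeasurableSpace.comap (ψ n) inferInstance)
          (fun _ => ⨆ n, (F n : MeasurableSpace Ω))) i) P) :
    ∀ G : Set Ω, MeasurableSet[⨆ n, (F n : MeasurableSpace Ω)] G →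
      ∀ (s : Finset ℕ) (c : ℕ → ℝ), (∀ n ∈ s, c n = 1 ∨ c n = -1) →
      P (G ∩ ⋂ n ∈ s, {ω | ψ n ω = c n}) = P G * 2⁻¹ ^ s.card := by
  intro G hG s c hc
  classical
  set f : ℕ ⊕ ℕ ⊕ Unit → Set Ω := fun i =>
    Sum.elim (fun _ => Set.univ) (Sum.elim (fun n => {ω | ψ n ω = c n}) (fun _ => G)) i with hf
  have hmeas : ∀ i ∈ insert (Sum.inr (Sum.inr ())) (s.image (fun n => Sum.inr (Sum.inl n))),
      MeasurableSet[Sum.elim (fun n => MeasurableSpace.comap (ζ n) inferInstance)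
        (Sum.elim (fun n => MeasurableSpace.comap (ψ n) inferInstance)
          (fun _ => ⨆ n, (F n : MeasurableSpace Ω))) i] (f i) := by
    intro i hi
    rcases Finset.mem_insert.mp hi with h | h
    · subst h; exact hG
    · obtain ⟨n, hn, rfl⟩ := Finset.mem_image.mp h
      exact MeasurableSpace.measurableSet_comap.mpr ⟨{c n}, measurableSet_singleton _, rfl⟩
  have h := hindep.meas_biInter hmeas
  have hnotmem : (Sum.inr (Sum.inr ()) : ℕ ⊕ ℕ ⊕ Unit)
      ∉ s.image (fun n => Sum.inr (Sum.inl n)) := by simp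
  have hInter : (⋂ i ∈ insert (Sum.inr (Sum.inr ()))
        (s.image (fun n => Sum.inr (Sum.inl n))), f i)
      = G ∩ ⋂ n ∈ s, {ω | ψ n ω = c n} := by
    rw [Finset.set_biInter_insert, Finset.set_biInter_finset_image]; rfl
  have hProd : (∏ i ∈ insert (Sum.inr (Sum.inr ()))
        (s.image (fun n => Sum.inr (Sum.inl n))), P (f i))
      = P G * 2⁻¹ ^ s.card := by
    rw [Finset.prod_insert hnotmem,
      Finset.prod_image (fun a _ b _ hab => by
        simpa using hab)]
    congr 1
    calc (∏ n ∈ s, P (f (Sum.inr (Sum.inl n)))) = ∏ n ∈ s, (2⁻¹ : ENNReal) := by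
          refine Finset.prod_congr rfl (fun n hn => ?_)
          rcases hc n hn with h' | h'
          · show P {ω | ψ n ω = c n} = 2⁻¹
            rw [h']; exact (hψd n).1
          · show P {ω | ψ n ω = c n} = 2⁻¹
            rw [h']; exact (hψd n).2
    _ = (2⁻¹ : ENNReal) ^ s.card := Finset.prod_const _
  rw [hInter, hProd] at h
  exact h

end Indep
section MasterS

open MeasureTheory ProbabilityTheory

lemma masterLemma {Ω : Type*} [mΩ : MeasurableSpace Ω] (P : Measure Ω) [IsProbabilityMeasure P]
    (F : MeasureTheory.Filtration ℕ mΩ)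
    (ξ η : ℕ → Ω → ℝ)
    (hξm : ∀ n, 1 ≤ n → Measurable[F n] (ξ n))
    (hηm : ∀ n, 1 ≤ n → Measurable[F n] (η n))
    (hξv : ∀ n ω, ξ n ω = 1 ∨ ξ n ω = -1)
    (hηv : ∀ n ω, η n ω = 1 ∨ η n ω = -1)
    (hhalf : ∀ n, 1 ≤ n →
      (P[({ω | ξ n ω = 1}).indicator (fun _ => (1 : ℝ)) | F (n - 1)] =ᵐ[P] fun _ => 1 / 2) ∧
      (P[({ω | ξ n ω = -1}).indicator (fun _ => (1 : ℝ)) | F (n - 1)] =ᵐ[P] fun _ => 1 / 2) ∧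
      (P[({ω | η n ω = 1}).indicator (fun _ => (1 : ℝ)) | F (n - 1)] =ᵐ[P] fun _ => 1 / 2) ∧
      (P[({ω | η n ω = -1}).indicator (fun _ => (1 : ℝ)) | F (n - 1)] =ᵐ[P] fun _ => 1 / 2))
    (ζ ψ : ℕ → Ω → ℝ)
    (hζm : ∀ n, Measurable (ζ n)) (hψm : ∀ n, Measurable (ψ n))
    (hIndζ : ∀ G : Set Ω, MeasurableSet[⨆ n, (F n : MeasurableSpace Ω)] G →
      ∀ (s : Finset ℕ) (c : ℕ → ℝ), (∀ n ∈ s, c n = 1 ∨ c n = -1) →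
      P (G ∩ ⋂ n ∈ s, {ω | ζ n ω = c n}) = P G * 2⁻¹ ^ s.card)
    (k l : ℕ) (hk : 1 ≤ k) (hl : 1 ≤ l)
    (nn : Fin k → ℕ) (mm : Fin l → ℕ)
    (hn1 : ∀ i, 1 ≤ nn i) (hm1 : ∀ j, 1 ≤ mm j)
    (hnmono : StrictMono nn) (hmmono : StrictMono mm)
    (x : Fin k → ℝ) (y : Fin l → ℝ)
    (hx : ∀ i, x i = 1 ∨ x i = -1) (hy : ∀ j, y j = 1 ∨ y j = -1) :
    P ({ω | ∀ i, xiAlpha ξ η ζ (nn i) ω = x i} ∩ {ω | ∀ j, xiBeta ξ η ψ (mm j) ω = y j}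
          ∩ {ω | betaProc ξ η (mm ⟨l - 1, Nat.sub_lt hl Nat.one_pos⟩) ω
              < alphaProc ξ η (nn ⟨k - 1, Nat.sub_lt hk Nat.one_pos⟩) ω})
      = 2⁻¹ * P ({ω | ∀ i : Fin k, (i : ℕ) + 1 < k → xiAlpha ξ η ζ (nn i) ω = x i}
            ∩ {ω | ∀ j, xiBeta ξ η ψ (mm j) ω = y j}
            ∩ {ω | betaProc ξ η (mm ⟨l - 1, Nat.sub_lt hl Nat.one_pos⟩) ω
                < alphaProc ξ η (nn ⟨k - 1, Nat.sub_lt hk Nat.one_pos⟩) ω}) := by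
  classical
  set η' : ℕ → Ω → ℝ := (fun m ω' => -η m ω') with hη'def
  have hη'm : ∀ n, 1 ≤ n → Measurable[F n] (η' n) := fun n hn => (hηm n hn).neg
  have hη'v : ∀ n ω, η' n ω = 1 ∨ η' n ω = -1 := fun n ω => by
    rcases hηv n ω with h | h <;> simp [hη'def, h]
  have hβα : betaProc ξ η = alphaProc ξ η' := betaProc_eq_neg hξv hηv
  have hxiB : xiBeta ξ η ψ = xiAlpha ξ η' ψ := xiBeta_eq_neg ψ hξv hηv
  rw [hβα, hxiB]
  set kk : Fin k := ⟨k - 1, Nat.sub_lt hk Nat.one_pos⟩ with hkk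
  set ll : Fin l := ⟨l - 1, Nat.sub_lt hl Nat.one_pos⟩ with hll
  set N := nn kk with hNdef
  set M := mm ll with hMdef
  have hN1 : 1 ≤ N := hn1 kk
  have hM1 : 1 ≤ M := hm1 ll
  have hnnN : ∀ j : Fin k, nn j ≤ N := fun j =>
    hnmono.monotone (Fin.le_def.mpr (by rw [hkk]; have := j.2; simp; omega))
  have hmmM : ∀ j : Fin l, mm j ≤ M := fun j =>
    hmmono.monotone (Fin.le_def.mpr (by rw [hll]; have := j.2; simp; omega))
  have hnnlt : ∀ j : Fin k, (j : ℕ) + 1 < k → nn j < N := fun j hj =>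
    hnmono (Fin.lt_def.mpr (by rw [hkk]; simp; omega))
  -- the constituent sets
  set A' : Set Ω := {ω | ∀ i : Fin k, (i : ℕ) + 1 < k → xiAlpha ξ η ζ (nn i) ω = x i}
    with hA'def
  set Bs : Set Ω := {ω | ∀ j, xiAlpha ξ η' ψ (mm j) ω = y j} with hBsdef
  set W : Set Ω := {ω | alphaProc ξ η' M ω < alphaProc ξ η N ω} with hWdef
  set X : Set Ω := {ω | xiAlpha ξ η ζ N ω = x kk} with hXdef
  set E : Set Ω := A' ∩ Bs ∩ W with hEdef
  -- measurability of the pieces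
  have hsuple : ∀ t : ℕ, (F t : MeasurableSpace Ω) ≤ ⨆ n, (F n : MeasurableSpace Ω) :=
    fun t => le_iSup (fun n => (F n : MeasurableSpace Ω)) t
  have hA'meas : MeasurableSet A' := by
    rw [hA'def, Set.setOf_forall]
    refine MeasurableSet.iInter fun j => ?_
    by_cases hj : (j : ℕ) + 1 < k
    · have h2 : {ω | (j : ℕ) + 1 < k → xiAlpha ξ η ζ (nn j) ω = x j}
          = {ω | xiAlpha ξ η ζ (nn j) ω = x j} := by ext ω; simp [hj]
      rw [h2]
      exact measurableSet_xiAlpha hξm hηm hζm (hn1 j) (x j)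
    · have h2 : {ω | (j : ℕ) + 1 < k → xiAlpha ξ η ζ (nn j) ω = x j} = Set.univ := by
        ext ω; simp [hj]
      rw [h2]
      exact MeasurableSet.univ
  have hBsmeas : MeasurableSet Bs := by
    rw [hBsdef, Set.setOf_forall]
    exact MeasurableSet.iInter fun j =>
      measurableSet_xiAlpha hξm hη'm hψm (hm1 j) (y j)
  have hWmeas : MeasurableSet W := by
    have : W = ⋃ t : ℕ, ({ω | alphaProc ξ η' M ω = (t : ℕ∞)}
        ∩ {ω | Tproc ξ η t ω < N}) := by
      ext ω
      simp only [hWdef, Set.mem_setOf_eq, Set.mem_iUnion, Set.mem_inter_iff]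
      constructor
      · intro h
        obtain ⟨t, ht⟩ := WithTop.ne_top_iff_exists.mp (ne_top_of_lt h)
        refine ⟨t, ht.symm, ?_⟩
        by_contra hc
        push_neg at hc
        have := (alphaProc_le_iff ξ η hN1 t ω).mpr hc
        rw [← ht] at h
        exact absurd (lt_of_le_of_lt this h) (lt_irrefl _)
      · rintro ⟨t, ht, hT⟩
        rw [ht]
        by_contra hc
        push_neg at hc
        have : alphaProc ξ η N ω ≤ (t : ℕ∞) := hc
        have := (alphaProc_le_iff ξ η hN1 t ω).mp this
        omega
    rw [this]
    exact MeasurableSet.iUnion fun t =>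
      (measurableSet_alpha_coe' hξm hη'm hM1 t F.le).inter
        (measSet_mono (F.le t) (measurable_Tproc hξm hηm t (measurableSet_Iio (a := N))))
  have hEmeas : MeasurableSet E := (hA'meas.inter hBsmeas).inter hWmeas
  have hXmeas : MeasurableSet X := measurableSet_xiAlpha hξm hηm hζm hN1 (x kk)
  -- split off the last constraint
  have hsplit : {ω | ∀ i, xiAlpha ξ η ζ (nn i) ω = x i} = A' ∩ X := by
    ext ω
    simp only [hA'def, hXdef, Set.mem_setOf_eq, Set.mem_inter_iff]
    constructor
    · intro h
      exact ⟨fun i _ => h i, h kk⟩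
    · rintro ⟨h1, h2⟩ i
      by_cases hik : (i : ℕ) + 1 < k
      · exact h1 i hik
      · have : i = kk := by
          rw [hkk]
          apply Fin.ext
          have := i.2
          simp
          omega
        rw [this]
        exact h2
  rw [hsplit]
  have hrearr : A' ∩ X ∩ Bs ∩ W = E ∩ X := by
    rw [hEdef]
    ext ω
    simp only [Set.mem_inter_iff]
    tauto
  rw [hrearr]
  -- the key case analysis
  have key : ∀ c : ℕ∞,
      P (E ∩ {ω | alphaProc ξ η N ω = c} ∩ X)
        = 2⁻¹ * P (E ∩ {ω | alphaProc ξ η N ω = c}) := by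
    intro c
    induction c using ENat.recTopCoe with
    | top =>
      set G : Fin k → Set Ω := fun j0 => (E ∩ {ω | alphaProc ξ η N ω = ⊤}) ∩
        ({ω | alphaProc ξ η (nn j0) ω = ⊤} ∩
          ⋂ j : Fin k, ⋂ _ : (j : ℕ) < (j0 : ℕ), {ω | alphaProc ξ η (nn j) ω ≠ ⊤}) with hGdef
      have htopmono : ∀ (j j' : Fin k), (j : ℕ) ≤ (j' : ℕ) → ∀ ω,
          alphaProc ξ η (nn j) ω = ⊤ → alphaProc ξ η (nn j') ω = ⊤ := by
        intro j j' hjj' ω h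
        have h2 := alphaProc_mono ξ η (hn1 j) (hnmono.monotone (Fin.le_def.mpr hjj')) ω
        rw [h] at h2
        exact top_le_iff.mp h2
      have hGdec : E ∩ {ω | alphaProc ξ η N ω = ⊤} = ⋃ j0 : Fin k, G j0 := by
        apply Set.Subset.antisymm
        · intro ω hω
          have hex : ∃ jv : ℕ, ∃ h : jv < k, alphaProc ξ η (nn ⟨jv, h⟩) ω = ⊤ :=
            ⟨k - 1, Nat.sub_lt hk Nat.one_pos, hω.2⟩
          obtain ⟨hj0k, hj0top⟩ := Nat.find_spec hex
          refine Set.mem_iUnion.mpr ⟨⟨Nat.find hex, hj0k⟩, hω, hj0top, ?_⟩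
          refine Set.mem_iInter.mpr fun j => Set.mem_iInter.mpr fun hj => ?_
          intro htop
          exact Nat.find_min hex hj ⟨j.2, htop⟩
        · exact Set.iUnion_subset fun j0 => Set.inter_subset_left
      have hGdj : ∀ a b : Fin k, a < b → Disjoint (G a) (G b) := by
        intro a b hab
        refine Set.disjoint_left.mpr ?_
        rintro ω ⟨_, hatop, _⟩ ⟨_, _, hbint⟩
        exact (Set.mem_iInter.mp (Set.mem_iInter.mp hbint a) (Fin.lt_def.mp hab)) hatop
      have hGpair : Pairwise (Function.onFun Disjoint G) := fun a b hab =>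
        (lt_or_gt_of_ne hab).elim (hGdj a b) (fun h => (hGdj b a h).symm)
      have hGmeas : ∀ j0, MeasurableSet (G j0) := by
        intro j0
        refine (hEmeas.inter (measurableSet_alpha_top hξm hηm hN1 F.le)).inter ?_
        refine (measurableSet_alpha_top hξm hηm (hn1 j0) F.le).inter ?_
        refine MeasurableSet.iInter fun j => MeasurableSet.iInter fun hj => ?_
        exact (measurableSet_alpha_top hξm hηm (hn1 j) F.le).compl
      have hGkey : ∀ j0 : Fin k, P (G j0 ∩ X) = 2⁻¹ * P (G j0) := by
        intro j0
        set H : Set Ω := {ω | alphaProc ξ η (nn j0) ω = ⊤} ∩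
          ((⋂ j : Fin k, ⋂ _ : (j : ℕ) < (j0 : ℕ),
              ⋃ t : ℕ, ({ω | alphaProc ξ η (nn j) ω = (t : ℕ∞)} ∩ {ω | ξ t ω = x j})) ∩
            ({ω | alphaProc ξ η' M ω ≠ ⊤} ∩
              ⋂ j : Fin l,
                ⋃ t : ℕ, ({ω | alphaProc ξ η' (mm j) ω = (t : ℕ∞)}
                  ∩ {ω | ξ t ω = y j}))) with hHdef
        have hHmeas : MeasurableSet[⨆ n, (F n : MeasurableSpace Ω)] H := by
          refine (measurableSet_alpha_top hξm hηm (hn1 j0) hsuple).inter ?_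
          refine MeasurableSet.inter ?_ ?_
          · refine MeasurableSet.iInter fun j => MeasurableSet.iInter fun hj => ?_
            refine MeasurableSet.iUnion fun t => ?_
            exact measSet_mono (hsuple t) (measurableSet_alpha_coe_xi hξm hηm (hn1 j) t (x j))
          · refine MeasurableSet.inter ?_ ?_
            · exact (measurableSet_alpha_top hξm hη'm hM1 hsuple).compl
            · refine MeasurableSet.iInter fun j => MeasurableSet.iUnion fun t => ?_
              exact measSet_mono (hsuple t)
                (measurableSet_alpha_coe_xi hξm hη'm (hm1 j) t (y j))
        have hZ : ∀ S : Finset (Fin k),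
            P (H ∩ ⋂ j ∈ S, {ω | ζ (nn j) ω = x j}) = P H * 2⁻¹ ^ S.card := by
          intro S
          set c : ℕ → ℝ :=
            fun nv => if h : ∃ j, j ∈ S ∧ nn j = nv then x h.choose else 1 with hcdef
          have hcx : ∀ j ∈ S, c (nn j) = x j := by
            intro j hj
            have hex : ∃ j', j' ∈ S ∧ nn j' = nn j := ⟨j, hj, rfl⟩
            rw [hcdef]
            simp only [dif_pos hex]
            have hspec := hex.choose_spec
            have hj' : hex.choose = j := hnmono.injective hspec.2
            rw [hj']
          have hvals : ∀ nv ∈ S.image (fun j => nn j), c nv = 1 ∨ c nv = -1 := by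
            intro nv hnv
            obtain ⟨j, hj, rfl⟩ := Finset.mem_image.mp hnv
            rw [hcx j hj]
            exact hx j
          have h := hIndζ H hHmeas (S.image (fun j => nn j)) c hvals
          rw [Finset.set_biInter_finset_image] at h
          rw [Finset.card_image_of_injective S hnmono.injective] at h
          have hsets : (⋂ j ∈ S, {ω | ζ (nn j) ω = c (nn j)})
              = ⋂ j ∈ S, {ω | ζ (nn j) ω = x j} := by
            refine Set.iInter₂_congr fun j hj => ?_
            rw [hcx j hj]
          rw [hsets] at h
          exact h
        set S0 : Finset (Fin k) := Finset.univ.filter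
          (fun j => (j0 : ℕ) ≤ (j : ℕ) ∧ (j : ℕ) + 1 < k) with hS0def
        set S1 : Finset (Fin k) :=
          Finset.univ.filter (fun j => (j0 : ℕ) ≤ (j : ℕ)) with hS1def
        have hj0le : (j0 : ℕ) ≤ k - 1 := by have := j0.2; omega
        have hkkval : (kk : ℕ) = k - 1 := by rw [hkk]
        have hkkmem : kk ∉ S0 := by
          rw [hS0def]
          simp only [Finset.mem_filter, Finset.mem_univ, true_and, not_and]
          intro _
          omega
        have hins : S1 = insert kk S0 := by
          ext j
          rw [hS1def, hS0def]
          simp only [Finset.mem_insert, Finset.mem_filter, Finset.mem_univ, true_and]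
          constructor
          · intro hj
            by_cases hjk : (j : ℕ) + 1 < k
            · exact Or.inr ⟨hj, hjk⟩
            · refine Or.inl (Fin.ext ?_)
              have := j.2
              omega
          · rintro (rfl | ⟨h1, _⟩)
            · omega
            · exact h1
        have hS1card : S1.card = S0.card + 1 := by
          rw [hins, Finset.card_insert_of_notMem hkkmem]
        have hGHeq : G j0 = H ∩ ⋂ j ∈ S0, {ω | ζ (nn j) ω = x j} := by
          ext ω
          simp only [hGdef, hHdef, hEdef, hA'def, hBsdef, hWdef, hS0def, Set.mem_inter_iff,
            Set.mem_setOf_eq, Set.mem_iInter, Set.mem_iUnion, Finset.mem_filter,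
            Finset.mem_univ, true_and]
          constructor
          · rintro ⟨⟨⟨⟨hA'ω, hBω⟩, hWω⟩, hαN⟩, hj0top, hne⟩
            have hβne : alphaProc ξ η' M ω ≠ ⊤ := ne_top_of_lt hWω
            refine ⟨⟨hj0top, ⟨?_, ⟨hβne, ?_⟩⟩⟩, ?_⟩
            · intro j hj
              have hjk : (j : ℕ) + 1 < k := by have := j0.2; omega
              obtain ⟨t, ht⟩ := WithTop.ne_top_iff_exists.mp (hne j hj)
              exact ⟨t, ht.symm, by rw [← xiAlpha_of_coe ξ η ht.symm]; exact hA'ω j hjk⟩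
            · intro j
              have hle := alphaProc_mono ξ η' (hm1 j) (hmmM j) ω
              have hne2 : alphaProc ξ η' (mm j) ω ≠ ⊤ := by
                intro hc
                rw [hc] at hle
                exact hβne (top_le_iff.mp hle)
              obtain ⟨t, ht⟩ := WithTop.ne_top_iff_exists.mp hne2
              exact ⟨t, ht.symm, by rw [← xiAlpha_of_coe ξ η' ht.symm]; exact hBω j⟩
            · intro j hj
              have htop := htopmono j0 j hj.1 ω hj0top
              rw [← xiAlpha_of_top ξ η (ζ := ζ) htop]
              exact hA'ω j hj.2
          · rintro ⟨⟨hj0top, hFA, hβne, hFB⟩, hζs⟩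
            have hαN : alphaProc ξ η N ω = ⊤ :=
              htopmono j0 kk (by omega) ω hj0top
            refine ⟨⟨⟨⟨?_, ?_⟩, ?_⟩, hαN⟩, hj0top, ?_⟩
            · intro j hjk
              by_cases hjj0 : (j : ℕ) < (j0 : ℕ)
              · obtain ⟨t, hteq, hval⟩ := hFA j hjj0
                rw [xiAlpha_of_coe ξ η hteq]
                exact hval
              · push_neg at hjj0
                have htop := htopmono j0 j hjj0 ω hj0top
                rw [xiAlpha_of_top ξ η htop]
                exact hζs j ⟨hjj0, hjk⟩
            · intro j
              obtain ⟨t, hteq, hval⟩ := hFB j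
              rw [xiAlpha_of_coe ξ η' hteq]
              exact hval
            · rw [hαN]
              exact lt_top_iff_ne_top.mpr hβne
            · intro j hj
              obtain ⟨t, hteq, _⟩ := hFA j hj
              rw [hteq]
              exact WithTop.coe_ne_top
        have hGHXeq : G j0 ∩ X = H ∩ ⋂ j ∈ S1, {ω | ζ (nn j) ω = x j} := by
          ext ω
          simp only [hGdef, hHdef, hEdef, hA'def, hBsdef, hWdef, hXdef, hS1def,
            Set.mem_inter_iff, Set.mem_setOf_eq, Set.mem_iInter, Set.mem_iUnion,
            Finset.mem_filter, Finset.mem_univ, true_and]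
          constructor
          · rintro ⟨⟨⟨⟨⟨hA'ω, hBω⟩, hWω⟩, hαN⟩, hj0top, hne⟩, hXω⟩
            have hβne : alphaProc ξ η' M ω ≠ ⊤ := ne_top_of_lt hWω
            refine ⟨⟨hj0top, ⟨?_, ⟨hβne, ?_⟩⟩⟩, ?_⟩
            · intro j hj
              have hjk : (j : ℕ) + 1 < k := by have := j0.2; omega
              obtain ⟨t, ht⟩ := WithTop.ne_top_iff_exists.mp (hne j hj)
              exact ⟨t, ht.symm, by rw [← xiAlpha_of_coe ξ η ht.symm]; exact hA'ω j hjk⟩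
            · intro j
              have hle := alphaProc_mono ξ η' (hm1 j) (hmmM j) ω
              have hne2 : alphaProc ξ η' (mm j) ω ≠ ⊤ := by
                intro hc
                rw [hc] at hle
                exact hβne (top_le_iff.mp hle)
              obtain ⟨t, ht⟩ := WithTop.ne_top_iff_exists.mp hne2
              exact ⟨t, ht.symm, by rw [← xiAlpha_of_coe ξ η' ht.symm]; exact hBω j⟩
            · intro j hj
              by_cases hjk : (j : ℕ) + 1 < k
              · have htop := htopmono j0 j hj ω hj0top
                rw [← xiAlpha_of_top ξ η (ζ := ζ) htop]
                exact hA'ω j hjk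
              · have hjeq : j = kk := by
                  refine Fin.ext ?_
                  have := j.2
                  omega
                rw [hjeq, ← xiAlpha_of_top ξ η (ζ := ζ) hαN]
                exact hXω
          · rintro ⟨⟨hj0top, hFA, hβne, hFB⟩, hζs⟩
            have hαN : alphaProc ξ η N ω = ⊤ :=
              htopmono j0 kk (by omega) ω hj0top
            refine ⟨⟨⟨⟨⟨?_, ?_⟩, ?_⟩, hαN⟩, hj0top, ?_⟩, ?_⟩
            · intro j hjk
              by_cases hjj0 : (j : ℕ) < (j0 : ℕ)
              · obtain ⟨t, hteq, hval⟩ := hFA j hjj0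
                rw [xiAlpha_of_coe ξ η hteq]
                exact hval
              · push_neg at hjj0
                have htop := htopmono j0 j hjj0 ω hj0top
                rw [xiAlpha_of_top ξ η htop]
                exact hζs j hjj0
            · intro j
              obtain ⟨t, hteq, hval⟩ := hFB j
              rw [xiAlpha_of_coe ξ η' hteq]
              exact hval
            · rw [hαN]
              exact lt_top_iff_ne_top.mpr hβne
            · intro j hj
              obtain ⟨t, hteq, _⟩ := hFA j hj
              rw [hteq]
              exact WithTop.coe_ne_top
            · rw [xiAlpha_of_top ξ η hαN]
              exact hζs kk (by omega)
        rw [hGHXeq, hGHeq, hZ S1, hZ S0, hS1card, pow_succ]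
        ring
      calc P (E ∩ {ω | alphaProc ξ η N ω = ⊤} ∩ X)
          = P (⋃ j0 : Fin k, (G j0 ∩ X)) := by rw [← Set.iUnion_inter, ← hGdec]
        _ = ∑' j0 : Fin k, P (G j0 ∩ X) := measure_iUnion
            (fun a b hab => ((hGpair hab).mono Set.inter_subset_left Set.inter_subset_left))
            (fun j0 => (hGmeas j0).inter hXmeas)
        _ = ∑' j0 : Fin k, 2⁻¹ * P (G j0) := tsum_congr hGkey
        _ = 2⁻¹ * ∑' j0 : Fin k, P (G j0) := ENNReal.tsum_mul_left
        _ = 2⁻¹ * P (E ∩ {ω | alphaProc ξ η N ω = ⊤}) := by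
            rw [← measure_iUnion hGpair hGmeas, ← hGdec]
    | coe i =>
      rcases Nat.eq_zero_or_pos i with hi0 | hi1
      · subst hi0
        have hempty : E ∩ {ω | alphaProc ξ η N ω = ((0 : ℕ) : ℕ∞)} = ∅ := by
          ext ω
          simp only [Set.mem_inter_iff, Set.mem_setOf_eq, Set.mem_empty_iff_false, iff_false,
            not_and]
          exact fun _ => alphaProc_ne_zero ξ η hN1 ω
        rw [hempty]
        simp
      · set C : Set Ω := {ω | Tproc ξ η (i - 1) ω = N - 1} ∩
          ({ω | M ≤ Tproc ξ η' (i - 1) ω} ∩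
            ((⋂ j : Fin k, ⋂ _ : (j : ℕ) + 1 < k,
                ⋃ t : ℕ, ⋃ _ : t ≤ i - 1,
                  ({ω | alphaProc ξ η (nn j) ω = (t : ℕ∞)} ∩ {ω | ξ t ω = x j})) ∩
              (⋂ j : Fin l,
                ⋃ t : ℕ, ⋃ _ : t ≤ i - 1,
                  ({ω | alphaProc ξ η' (mm j) ω = (t : ℕ∞)} ∩ {ω | ξ t ω = y j})))) with hCdef
        have hCmeas : MeasurableSet[F (i - 1)] C := by
          refine MeasurableSet.inter (measurableSet_T_eq hξm hηm (i - 1) (N - 1)) ?_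
          refine MeasurableSet.inter (measurableSet_T_ge hξm hη'm (i - 1) M) ?_
          refine MeasurableSet.inter ?_ ?_
          · refine MeasurableSet.iInter fun j => MeasurableSet.iInter fun hj => ?_
            refine MeasurableSet.iUnion fun t => MeasurableSet.iUnion fun ht => ?_
            exact measSet_mono (F.mono ht) (measurableSet_alpha_coe_xi hξm hηm (hn1 j) t (x j))
          · refine MeasurableSet.iInter fun j => ?_
            refine MeasurableSet.iUnion fun t => MeasurableSet.iUnion fun ht => ?_
            exact measSet_mono (F.mono ht) (measurableSet_alpha_coe_xi hξm hη'm (hm1 j) t (y j))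
        have hXi : ∀ ω, alphaProc ξ η N ω = (i : ℕ∞) → (ω ∈ X ↔ ξ i ω = x kk) := by
          intro ω hα
          rw [hXdef, Set.mem_setOf_eq, xiAlpha_of_coe ξ η hα]
        have hDi : E ∩ {ω | alphaProc ξ η N ω = (i : ℕ∞)} = C ∩ {ω | ξ i ω = η i ω} := by
          ext ω
          simp only [hEdef, hCdef, hA'def, hBsdef, hWdef, Set.mem_inter_iff, Set.mem_setOf_eq,
            Set.mem_iInter, Set.mem_iUnion]
          constructor
          · rintro ⟨⟨⟨hA'ω, hBω⟩, hWω⟩, hα⟩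
            obtain ⟨hTi, hTi1⟩ := (alphaProc_eq_coe_iff ξ η hN1 hi1 ω).mp hα
            have hξη := alphaProc_eq_coe_xi ξ η hN1 hi1 hα
            have hβle : alphaProc ξ η' M ω ≤ ((i - 1 : ℕ) : ℕ∞) := by
              rw [hα] at hWω
              obtain ⟨t, ht⟩ := WithTop.ne_top_iff_exists.mp (ne_top_of_lt hWω)
              rw [← ht] at hWω ⊢
              have h1 : t < i := Nat.cast_lt.mp hWω
              exact Nat.cast_le.mpr (by omega)
            refine ⟨⟨hTi1, ⟨(alphaProc_le_iff ξ η' hM1 (i - 1) ω).mp hβle, ⟨?_, ?_⟩⟩⟩, hξη⟩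
            · intro j hj
              have hle : alphaProc ξ η (nn j) ω ≤ ((i - 1 : ℕ) : ℕ∞) := by
                refine (alphaProc_le_iff ξ η (hn1 j) (i - 1) ω).mpr ?_
                rw [hTi1]
                have := hnnlt j hj
                omega
              obtain ⟨t, hteq, htl⟩ := WithTop.le_coe_iff.mp hle
              exact ⟨t, htl, hteq, by rw [← xiAlpha_of_coe ξ η hteq]; exact hA'ω j hj⟩
            · intro j
              have hle : alphaProc ξ η' (mm j) ω ≤ ((i - 1 : ℕ) : ℕ∞) :=
                le_trans (alphaProc_mono ξ η' (hm1 j) (hmmM j) ω) hβle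
              obtain ⟨t, hteq, htl⟩ := WithTop.le_coe_iff.mp hle
              exact ⟨t, htl, hteq, by rw [← xiAlpha_of_coe ξ η' hteq]; exact hBω j⟩
          · rintro ⟨⟨hT1, hSS, hFA, hFB⟩, hξη⟩
            have hQ : Qproc ξ η i ω = 1 := by rw [Qproc, if_pos hξη]
            have hTi : Tproc ξ η i ω = N := by
              have hs := Tproc_succ ξ η (i - 1) ω
              rw [(by omega : i - 1 + 1 = i)] at hs
              omega
            have hα : alphaProc ξ η N ω = (i : ℕ∞) :=
              (alphaProc_eq_coe_iff ξ η hN1 hi1 ω).mpr ⟨hTi, hT1⟩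
            have hβ : alphaProc ξ η' M ω < alphaProc ξ η N ω := by
              rw [hα]
              refine lt_of_le_of_lt ((alphaProc_le_iff ξ η' hM1 (i - 1) ω).mpr hSS) ?_
              exact Nat.cast_lt.mpr (by omega : i - 1 < i)
            refine ⟨⟨⟨?_, ?_⟩, hβ⟩, hα⟩
            · intro j hj
              obtain ⟨t, ht, hteq, hval⟩ := hFA j hj
              rw [xiAlpha_of_coe ξ η hteq]
              exact hval
            · intro j
              obtain ⟨t, ht, hteq, hval⟩ := hFB j
              rw [xiAlpha_of_coe ξ η' hteq]
              exact hval
        have hDiX : E ∩ {ω | alphaProc ξ η N ω = (i : ℕ∞)} ∩ X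
            = C ∩ {ω | ξ i ω = η i ω} ∩ {ω | ξ i ω = x kk} := by
          rw [← hDi]
          ext ω
          simp only [Set.mem_inter_iff]
          constructor
          · rintro ⟨hD, hX⟩
            exact ⟨hD, (hXi ω hD.2).mp hX⟩
          · rintro ⟨hD, hX⟩
            exact ⟨hD, (hXi ω hD.2).mpr hX⟩
        rw [hDiX, hDi]
        exact KP P F hξm hηm hξv hηv hhalf hi1 C hCmeas (hx kk)
  -- level sets are measurable
  have hDmeas : ∀ c : ℕ∞, MeasurableSet (E ∩ {ω | alphaProc ξ η N ω = c}) := by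
    intro c
    refine hEmeas.inter ?_
    induction c using ENat.recTopCoe with
    | top => exact measurableSet_alpha_top hξm hηm hN1 F.le
    | coe i => exact measurableSet_alpha_coe' hξm hηm hN1 i F.le
  have hlvl : Pairwise (Function.onFun Disjoint fun c : ℕ∞ => E ∩ {ω | alphaProc ξ η N ω = c}) := by
    intro c c' hne
    refine Set.disjoint_left.mpr ?_
    rintro ω ⟨_, h1⟩ ⟨_, h2⟩
    rw [Set.mem_setOf_eq] at h1 h2
    exact hne (h1.symm.trans h2)
  have hE : E = ⋃ c : ℕ∞, E ∩ {ω | alphaProc ξ η N ω = c} := by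
    ext ω
    simp only [Set.mem_iUnion, Set.mem_inter_iff, Set.mem_setOf_eq]
    exact ⟨fun h => ⟨alphaProc ξ η N ω, h, rfl⟩, fun ⟨c, h, _⟩ => h⟩
  have hEX : E ∩ X = ⋃ c : ℕ∞, (E ∩ {ω | alphaProc ξ η N ω = c} ∩ X) := by
    rw [← Set.iUnion_inter, ← hE]
  calc P (E ∩ X) = ∑' c : ℕ∞, P (E ∩ {ω | alphaProc ξ η N ω = c} ∩ X) := by
        rw [hEX]
        exact measure_iUnion
          (fun c c' hne => ((hlvl hne).mono Set.inter_subset_left Set.inter_subset_left))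
          (fun c => (hDmeas c).inter hXmeas)
  _ = ∑' c : ℕ∞, 2⁻¹ * P (E ∩ {ω | alphaProc ξ η N ω = c}) := tsum_congr key
  _ = 2⁻¹ * ∑' c : ℕ∞, P (E ∩ {ω | alphaProc ξ η N ω = c}) := ENNReal.tsum_mul_left
  _ = 2⁻¹ * P E := by rw [← measure_iUnion hlvl hDmeas, ← hE]

end MasterS

theorem stmt_7
    {Ω : Type*} [mΩ : MeasurableSpace Ω] (P : Measure Ω) [IsProbabilityMeasure P]
    (F : MeasureTheory.Filtration ℕ mΩ) (hF0 : F 0 = ⊥)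
    (ξ η : ℕ → Ω → ℝ)
    (hξm : ∀ n, 1 ≤ n → Measurable[F n] (ξ n))
    (hηm : ∀ n, 1 ≤ n → Measurable[F n] (η n))
    (hξv : ∀ n ω, ξ n ω = 1 ∨ ξ n ω = -1)
    (hηv : ∀ n ω, η n ω = 1 ∨ η n ω = -1)
    (hhalf : ∀ n, 1 ≤ n →
      (P[({ω | ξ n ω = 1}).indicator (fun _ => (1 : ℝ)) | F (n - 1)] =ᵐ[P] fun _ => 1 / 2) ∧
      (P[({ω | ξ n ω = -1}).indicator (fun _ => (1 : ℝ)) | F (n - 1)] =ᵐ[P] fun _ => 1 / 2) ∧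
      (P[({ω | η n ω = 1}).indicator (fun _ => (1 : ℝ)) | F (n - 1)] =ᵐ[P] fun _ => 1 / 2) ∧
      (P[({ω | η n ω = -1}).indicator (fun _ => (1 : ℝ)) | F (n - 1)] =ᵐ[P] fun _ => 1 / 2))
    (ζ ψ : ℕ → Ω → ℝ)
    (hζm : ∀ n, Measurable (ζ n)) (hψm : ∀ n, Measurable (ψ n))
    (hζd : ∀ n, P {ω | ζ n ω = 1} = 2⁻¹ ∧ P {ω | ζ n ω = -1} = 2⁻¹)
    (hψd : ∀ n, P {ω | ψ n ω = 1} = 2⁻¹ ∧ P {ω | ψ n ω = -1} = 2⁻¹)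
    (hindep : iIndep (fun i : ℕ ⊕ ℕ ⊕ Unit =>
      Sum.elim (fun n => MeasurableSpace.comap (ζ n) inferInstance)
        (Sum.elim (fun n => MeasurableSpace.comap (ψ n) inferInstance)
          (fun _ => ⨆ n, (F n : MeasurableSpace Ω))) i) P)
    (k l : ℕ) (hk : 1 ≤ k) (hl : 1 ≤ l)
    (nn : Fin k → ℕ) (mm : Fin l → ℕ)
    (hn1 : ∀ i, 1 ≤ nn i) (hm1 : ∀ j, 1 ≤ mm j)
    (hnmono : StrictMono nn) (hmmono : StrictMono mm)
    (x : Fin k → ℝ) (y : Fin l → ℝ)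
    (hx : ∀ i, x i = 1 ∨ x i = -1) (hy : ∀ j, y j = 1 ∨ y j = -1) :
    (P ({ω | ∀ i, xiAlpha ξ η ζ (nn i) ω = x i} ∩ {ω | ∀ j, xiBeta ξ η ψ (mm j) ω = y j}
          ∩ {ω | betaProc ξ η (mm ⟨l - 1, by omega⟩) ω
              < alphaProc ξ η (nn ⟨k - 1, by omega⟩) ω})
      = 2⁻¹ * P ({ω | ∀ i : Fin k, (i : ℕ) + 1 < k → xiAlpha ξ η ζ (nn i) ω = x i}
            ∩ {ω | ∀ j, xiBeta ξ η ψ (mm j) ω = y j}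
            ∩ {ω | betaProc ξ η (mm ⟨l - 1, by omega⟩) ω
                < alphaProc ξ η (nn ⟨k - 1, by omega⟩) ω})) ∧
    (P ({ω | ∀ i, xiAlpha ξ η ζ (nn i) ω = x i} ∩ {ω | ∀ j, xiBeta ξ η ψ (mm j) ω = y j}
          ∩ {ω | alphaProc ξ η (nn ⟨k - 1, by omega⟩) ω
              < betaProc ξ η (mm ⟨l - 1, by omega⟩) ω})
      = 2⁻¹ * P ({ω | ∀ i, xiAlpha ξ η ζ (nn i) ω = x i}
            ∩ {ω | ∀ j : Fin l, (j : ℕ) + 1 < l → xiBeta ξ η ψ (mm j) ω = y j}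
            ∩ {ω | alphaProc ξ η (nn ⟨k - 1, by omega⟩) ω
                < betaProc ξ η (mm ⟨l - 1, by omega⟩) ω})) := by
  constructor
  · exact masterLemma P F ξ η hξm hηm hξv hηv hhalf ζ ψ hζm hψm
      (hIndzeta hζd hindep) k l hk hl nn mm hn1 hm1 hnmono hmmono x y hx hy
  · -- apply the master lemma with the roles of the two walks interchanged
    have hηmv : ∀ n ω, -η n ω = 1 ∨ -η n ω = -1 := by
      intro n ω; rcases hηv n ω with h | h <;> simp [h]
    have hηmm : ∀ n, 1 ≤ n → Measurable[F n] (fun ω => -η n ω) :=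
      fun n hn => (hηm n hn).neg
    have hhalfm : ∀ n, 1 ≤ n →
        (P[({ω | ξ n ω = 1}).indicator (fun _ => (1 : ℝ)) | F (n - 1)] =ᵐ[P]
          fun _ => 1 / 2) ∧
        (P[({ω | ξ n ω = -1}).indicator (fun _ => (1 : ℝ)) | F (n - 1)] =ᵐ[P]
          fun _ => 1 / 2) ∧
        (P[({ω | -η n ω = 1}).indicator (fun _ => (1 : ℝ)) | F (n - 1)] =ᵐ[P]
          fun _ => 1 / 2) ∧
        (P[({ω | -η n ω = -1}).indicator (fun _ => (1 : ℝ)) | F (n - 1)] =ᵐ[P]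
          fun _ => 1 / 2) := by
      intro n hn
      obtain ⟨h1, h2, h3, h4⟩ := hhalf n hn
      refine ⟨h1, h2, ?_, ?_⟩
      · have hs : {ω | -η n ω = 1} = {ω | η n ω = -1} := by
          ext ω
          simp only [Set.mem_setOf_eq]
          constructor <;> intro h <;> linarith
        rw [hs]; exact h4
      · have hs : {ω | -η n ω = -1} = {ω | η n ω = 1} := by
          ext ω
          simp only [Set.mem_setOf_eq]
          constructor <;> intro h <;> linarith
        rw [hs]; exact h3
    have h2 := masterLemma P F ξ (fun m ω' => -η m ω') hξm hηmm hξv hηmv hhalfm ψ ζ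
      hψm hζm (hIndpsi hψd hindep) l k hl hk mm nn hm1 hn1 hmmono hnmono y x hy hx
    have e1 : xiAlpha ξ (fun m ω' => -η m ω') ψ = xiBeta ξ η ψ :=
      (xiBeta_eq_neg ψ hξv hηv).symm
    have e2 : xiBeta ξ (fun m ω' => -η m ω') ζ = xiAlpha ξ η ζ :=
      (xiAlpha_eq_neg ζ hξv hηv).symm
    have e3 : betaProc ξ (fun m ω' => -η m ω') = alphaProc ξ η :=
      (alphaProc_eq_neg hξv hηv).symm
    have e4 : alphaProc ξ (fun m ω' => -η m ω') = betaProc ξ η :=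
      (betaProc_eq_neg hξv hηv).symm
    rw [e1, e2, e3, e4] at h2
    have hsw : ∀ (U V Z : Set Ω), U ∩ V ∩ Z = V ∩ U ∩ Z := by
      intro U V Z
      rw [Set.inter_comm U V]
    rw [hsw ({ω | ∀ i, xiAlpha ξ η ζ (nn i) ω = x i})
        ({ω | ∀ j, xiBeta ξ η ψ (mm j) ω = y j}),
      hsw ({ω | ∀ i, xiAlpha ξ η ζ (nn i) ω = x i})
        ({ω | ∀ j : Fin l, (j : ℕ) + 1 < l → xiBeta ξ η ψ (mm j) ω = y j})]
    exact h2
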